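/- With φ and V as above, V(·,s) → 0 in L²_ρ(ℝ^N) as s → +∞, where ρ(y) = (4π)^(-N/2) e^(-|y|²/4); in fact |V(y,s)| ≤ C(1+|y|²)/s for s ≥ 1 and some constant C depending only on p and N. -/

import Mathlib

open Real Set Filter MeasureTheory

lemma rpow_lip {r m M : ℝ} (hm : 0 < m) {x y : ℝ} (hx : x ∈ Set.Icc m M)
    (hy : y ∈ Set.Icc m M) :
    |x ^ r - y ^ r| ≤ (|r| * max (m ^ (r-1)) (M ^ (r-1))) * |x - y| := by
  have hd : ∀ t ∈ Set.Icc m M, HasDerivWithinAt (fun t : ℝ => t ^ r)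
      (r * t ^ (r-1)) (Set.Icc m M) t := fun t ht =>
    (Real.hasDerivAt_rpow_const (Or.inl (ne_of_gt (lt_of_lt_of_le hm ht.1)))).hasDerivWithinAt
  have hb : ∀ t ∈ Set.Icc m M, ‖r * t ^ (r-1)‖ ≤ |r| * max (m ^ (r-1)) (M ^ (r-1)) := by
    intro t ht
    have ht0 : 0 < t := lt_of_lt_of_le hm ht.1
    rw [norm_mul, Real.norm_eq_abs, Real.norm_eq_abs,
      abs_of_nonneg (Real.rpow_nonneg ht0.le _)]
    apply mul_le_mul_of_nonneg_left _ (abs_nonneg r)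
    rcases le_or_gt 0 (r-1) with h|h
    · exact le_max_of_le_right (Real.rpow_le_rpow ht0.le ht.2 h)
    · exact le_max_of_le_left (Real.rpow_le_rpow_of_nonpos hm ht.1 h.le)
  have := (convex_Icc m M).norm_image_sub_le_of_norm_hasDerivWithin_le hd hb hy hx
  simpa [Real.norm_eq_abs] using this

set_option maxHeartbeats 1000000 in
lemma key_bound (N : ℕ) (p : ℝ) (hp : 1 < p) :
    ∃ C > (0:ℝ), ∀ s ≥ (1:ℝ), ∀ w : ℝ, 0 ≤ w →
      |p * ((((p-1) + ((p-1)^2/(4*p)) * w / s) ^ (-(1:ℝ)/(p-1))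
          + (p-1) ^ (-(1:ℝ)/(p-1)) * N / (2*p*s)) ^ (p-1) - 1/(p-1))| ≤ C * (1+w) / s := by
  have hp0 : (0:ℝ) < p := by linarith
  obtain ⟨q, hqdef⟩ : ∃ q : ℝ, q = p - 1 := ⟨_, rfl⟩
  have hq : (0:ℝ) < q := by rw [hqdef]; linarith
  have he : -(1:ℝ)/q ≤ 0 := by
    apply div_nonpos_of_nonpos_of_nonneg <;> linarith
  obtain ⟨a, hadef⟩ : ∃ a : ℝ, a = q^2/(4*p) := ⟨_, rfl⟩
  have ha : 0 < a := by rw [hadef]; positivity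
  obtain ⟨κ, hκdef⟩ : ∃ κ : ℝ, κ = q ^ (-(1:ℝ)/q) := ⟨_, rfl⟩
  have hκ0 : 0 < κ := by rw [hκdef]; exact Real.rpow_pos_of_pos hq _
  obtain ⟨B0, hB0def⟩ : ∃ B0 : ℝ, B0 = κ * N / (2*p) := ⟨_, rfl⟩
  have hB0 : 0 ≤ B0 := by rw [hB0def]; positivity
  obtain ⟨m, hmdef⟩ : ∃ m : ℝ, m = (q + a) ^ (-(1:ℝ)/q) := ⟨_, rfl⟩
  have hm0 : 0 < m := by rw [hmdef]; exact Real.rpow_pos_of_pos (by linarith) _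
  obtain ⟨M, hMdef⟩ : ∃ M : ℝ, M = κ + B0 := ⟨_, rfl⟩
  have hmκ : m ≤ κ := by
    rw [hmdef, hκdef]
    exact Real.rpow_le_rpow_of_nonpos hq (by linarith) he
  have hκM : κ ≤ M := by rw [hMdef]; linarith
  obtain ⟨L, hLdef⟩ : ∃ L : ℝ, L = |q| * max (m ^ (q-1)) (M ^ (q-1)) := ⟨_, rfl⟩
  have hL : 0 ≤ L := by
    rw [hLdef]
    apply mul_nonneg (abs_nonneg _)
    exact le_trans (Real.rpow_nonneg hm0.le _) (le_max_left _ _)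
  obtain ⟨L2, hL2def⟩ : ∃ L2 : ℝ,
      L2 = |(-(1:ℝ)/q)| * max (q ^ ((-(1:ℝ)/q)-1)) ((q+a) ^ ((-(1:ℝ)/q)-1)) := ⟨_, rfl⟩
  have hL2 : 0 ≤ L2 := by
    rw [hL2def]
    apply mul_nonneg (abs_nonneg _)
    exact le_trans (Real.rpow_nonneg hq.le _) (le_max_left _ _)
  obtain ⟨E, hEdef⟩ : ∃ E : ℝ, E = max (L2 * a) B0 := ⟨_, rfl⟩
  have hE1 : L2 * a ≤ E := by rw [hEdef]; exact le_max_left _ _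
  have hE2 : B0 ≤ E := by rw [hEdef]; exact le_max_right _ _
  have hE : 0 ≤ E := le_trans hB0 hE2
  obtain ⟨D, hDdef⟩ : ∃ D : ℝ, D = max (L * E) (M ^ q + 1/q) + 1 := ⟨_, rfl⟩
  have hD1 : L * E ≤ D := by
    rw [hDdef]; have := le_max_left (L * E) (M ^ q + 1/q); linarith
  have hD2 : M ^ q + 1/q ≤ D := by
    rw [hDdef]; have := le_max_right (L * E) (M ^ q + 1/q); linarith
  have hD0 : 0 < D := by
    rw [hDdef]
    have h := le_max_left (L * E) (M ^ q + 1/q)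
    have := mul_nonneg hL hE; linarith
  refine ⟨p * D, by positivity, ?_⟩
  intro s hs w hw
  have hs0 : (0:ℝ) < s := by linarith
  have hκq : κ ^ q = 1/q := by
    rw [hκdef, ← Real.rpow_mul hq.le]
    rw [show (-(1:ℝ)/q) * q = -1 by field_simp]
    rw [Real.rpow_neg_one, one_div]
  obtain ⟨A, hAdef⟩ : ∃ A : ℝ, A = (q + a * w / s) ^ (-(1:ℝ)/q) := ⟨_, rfl⟩
  obtain ⟨B, hBdef⟩ : ∃ B : ℝ, B = κ * N / (2*p*s) := ⟨_, rfl⟩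
  have haws : 0 ≤ a * w / s := by positivity
  have hA0 : 0 < A := by rw [hAdef]; exact Real.rpow_pos_of_pos (by linarith) _
  have hAκ : A ≤ κ := by
    rw [hAdef, hκdef]
    exact Real.rpow_le_rpow_of_nonpos hq (by linarith) he
  have hBeq : B = B0 / s := by rw [hBdef, hB0def, div_div]
  have hB : 0 ≤ B := by rw [hBdef]; positivity
  have hBle : B ≤ B0 := by rw [hBeq]; exact div_le_self hB0 hs
  -- rewrite the goal in terms of the named constants
  rw [← hqdef, ← hadef, ← hκdef, ← hAdef, ← hBdef]
  rw [abs_mul, abs_of_pos hp0]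
  rw [show p * D * (1+w) / s = p * (D * (1+w) / s) by ring]
  apply mul_le_mul_of_nonneg_left _ hp0.le
  -- now : |(A + B) ^ q - 1/q| ≤ D * (1+w) / s
  rw [← hκq]
  rcases le_or_gt w s with hws | hws
  · -- small w
    have hawsa : a * w / s ≤ a := by
      rw [div_le_iff₀ hs0]
      nlinarith
    have hmA : m ≤ A := by
      rw [hAdef, hmdef]
      exact Real.rpow_le_rpow_of_nonpos (by linarith) (by linarith) he
    have hφI : A + B ∈ Set.Icc m M := ⟨by linarith, by rw [hMdef]; linarith⟩
    have hκI : κ ∈ Set.Icc m M := ⟨hmκ, hκM⟩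
    have h1 : |(A + B) ^ q - κ ^ q| ≤ L * |(A + B) - κ| := by
      rw [hLdef]; exact rpow_lip hm0 hφI hκI
    have h3 : |A - κ| ≤ L2 * (a * w / s) := by
      have hxI : q + a * w / s ∈ Set.Icc q (q + a) := ⟨by linarith, by linarith⟩
      have hyI : q ∈ Set.Icc q (q + a) := ⟨le_refl _, by linarith⟩
      have h := rpow_lip (r := -(1:ℝ)/q) hq hxI hyI
      rw [show q + a * w / s - q = a * w / s by ring, abs_of_nonneg haws] at h
      rw [hAdef, hκdef, hL2def]
      exact h
    have t1 : |(A + B) - κ| ≤ |A - κ| + |B| := by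
      rw [show A + B - κ = (A - κ) + B by ring]; exact abs_add_le _ _
    have t2 : |B| = B0 / s := by rw [abs_of_nonneg hB, hBeq]
    have h2 : |(A + B) - κ| ≤ L2 * (a * w / s) + B0 / s := by
      rw [t2] at t1; linarith
    have h4 : |(A + B) ^ q - κ ^ q| ≤ L * (L2 * (a * w / s) + B0 / s) :=
      le_trans h1 (mul_le_mul_of_nonneg_left h2 hL)
    have h5 : L * (L2 * (a * w / s) + B0 / s) ≤ D * (1+w) / s := by
      rw [show L * (L2 * (a * w / s) + B0 / s) = L * (L2 * (a * w) + B0) / s by ring]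
      rw [div_le_div_iff_of_pos_right hs0]
      have k1 : L2 * a * w ≤ E * w := mul_le_mul_of_nonneg_right hE1 hw
      have k2 : L2 * (a * w) + B0 ≤ E * (1 + w) := by
        have e : L2 * (a * w) = L2 * a * w := by ring
        have e2 : E * (1 + w) = E * w + E := by ring
        linarith
      have k3 : L * (L2 * (a * w) + B0) ≤ L * (E * (1 + w)) :=
        mul_le_mul_of_nonneg_left k2 hL
      have k5 : (L * E) * (1 + w) ≤ D * (1 + w) :=
        mul_le_mul_of_nonneg_right hD1 (by linarith)
      have k4 : L * (E * (1 + w)) = L * E * (1 + w) := by ring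
      linarith
    linarith
  · -- large w
    have hABM : A + B ≤ M := by rw [hMdef]; linarith
    have h0 : 0 ≤ (A + B) ^ q := Real.rpow_nonneg (by linarith) _
    have hMq : (A + B) ^ q ≤ M ^ q := Real.rpow_le_rpow (by linarith) hABM hq.le
    have hq1 : 0 < 1/q := by positivity
    have hMq0 : 0 ≤ M ^ q := Real.rpow_nonneg (by linarith [hκ0]) _
    have habs : |(A + B) ^ q - κ ^ q| ≤ M ^ q + 1/q := by
      rw [hκq, abs_le]
      constructor <;> linarith
    have hfrac : (1:ℝ) ≤ (1+w)/s := by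
      rw [le_div_iff₀ hs0]; linarith
    have hfin : M ^ q + 1/q ≤ D * (1+w) / s := by
      rw [mul_div_assoc]
      calc M ^ q + 1/q ≤ D := hD2
        _ = D * 1 := (mul_one D).symm
        _ ≤ D * ((1+w)/s) := mul_le_mul_of_nonneg_left hfrac hD0.le
    linarith

lemma gauss_int (N : ℕ) :
    Integrable (fun v : EuclideanSpace ℝ (Fin N) => Real.exp (-‖v‖^2/8)) := by
  have h := (GaussianFourier.integrable_cexp_neg_mul_sq_norm_add
      (V := EuclideanSpace ℝ (Fin N)) (b := ((1/8 : ℝ) : ℂ)) (by simp) 0 0).norm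
  refine h.congr (Filter.Eventually.of_forall fun v => ?_)
  have harg : (-((1/8:ℝ):ℂ) * ‖v‖^2 + 0 * (inner ℝ (0 : EuclideanSpace ℝ (Fin N)) v : ℝ))
      = ((-‖v‖^2/8 : ℝ) : ℂ) := by push_cast; ring
  simp only [harg, Complex.norm_exp_ofReal]

set_option maxHeartbeats 1000000 in
theorem potential_V_small_in_L2rho (N : ℕ) (hN : 1 ≤ N) (p : ℝ) (hp : 1 < p)
    (κ : ℝ) (hκ : κ = (p-1) ^ (-(1:ℝ)/(p-1)))
    (φ : EuclideanSpace ℝ (Fin N) → ℝ → ℝ)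
    (hφ : ∀ y s, φ y s =
      ((p-1) + ((p-1)^2/(4*p)) * ‖y‖^2 / s) ^ (-(1:ℝ)/(p-1)) + κ * N / (2*p*s))
    (V : EuclideanSpace ℝ (Fin N) → ℝ → ℝ)
    (hV : ∀ y s, V y s = p * ((φ y s) ^ (p-1) - 1/(p-1)))
    (ρ : EuclideanSpace ℝ (Fin N) → ℝ)
    (hρ : ∀ y, ρ y = (4*Real.pi) ^ (-(N:ℝ)/2) * Real.exp (-‖y‖^2/4)) :
    (∃ C > (0:ℝ), ∀ s ≥ (1:ℝ), ∀ y, |V y s| ≤ C * (1 + ‖y‖^2) / s) ∧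
    Filter.Tendsto (fun s => ∫ y, (V y s)^2 * ρ y) Filter.atTop (nhds 0) := by
  obtain ⟨C, hC0, hC⟩ := key_bound N p hp
  have hbound : ∀ s ≥ (1:ℝ), ∀ y : EuclideanSpace ℝ (Fin N),
      |V y s| ≤ C * (1 + ‖y‖^2) / s := by
    intro s hs y
    rw [hV, hφ, hκ]
    exact hC s hs (‖y‖^2) (by positivity)
  refine ⟨⟨C, hC0, hbound⟩, ?_⟩
  have hρ0 : ∀ y, 0 ≤ ρ y := fun y => by rw [hρ]; positivity
  obtain ⟨c, hcdef⟩ : ∃ c : ℝ, c = (4*Real.pi) ^ (-(N:ℝ)/2) := ⟨_, rfl⟩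
  have hc0 : 0 < c := by rw [hcdef]; positivity
  -- integrability of the dominating weight
  have hint : Integrable (fun y : EuclideanSpace ℝ (Fin N) => (1 + ‖y‖^2)^2 * ρ y) := by
    apply Integrable.mono ((gauss_int N).const_mul (256 * c))
    · apply Continuous.aestronglyMeasurable
      have hρc : Continuous ρ := by
        have : Continuous fun y : EuclideanSpace ℝ (Fin N) =>
            (4*Real.pi) ^ (-(N:ℝ)/2) * Real.exp (-‖y‖^2/4) :=
          continuous_const.mul (Real.continuous_exp.comp
            (((continuous_norm.pow 2).neg).div_const 4))
        convert this using 1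
        exact funext hρ
      exact ((continuous_const.add (continuous_norm.pow 2)).pow 2).mul hρc
    · filter_upwards with y
      have ht : (0:ℝ) ≤ ‖y‖^2 := by positivity
      have key : (1 + ‖y‖^2)^2 * ρ y ≤ 256 * c * Real.exp (-‖y‖^2/8) := by
        rw [hρ y, ← hcdef]
        have e1 : ‖y‖^2/16 + 1 ≤ Real.exp (‖y‖^2/16) := Real.add_one_le_exp _
        have e2 : (1 + ‖y‖^2)^2 ≤ (16 * Real.exp (‖y‖^2/16))^2 := by
          apply pow_le_pow_left₀ (by linarith) (by linarith) 2
        have e3 : (16 * Real.exp (‖y‖^2/16))^2 = 256 * Real.exp (‖y‖^2/8) := by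
          have h16 : ‖y‖^2/16 + ‖y‖^2/16 = ‖y‖^2/8 := by ring
          have epow : Real.exp (‖y‖^2/16) ^ 2 = Real.exp (‖y‖^2/8) := by
            rw [pow_two, ← Real.exp_add, h16]
          rw [mul_pow, epow]
          norm_num
        have e4 : Real.exp (‖y‖^2/8) * Real.exp (-‖y‖^2/4) = Real.exp (-‖y‖^2/8) := by
          rw [← Real.exp_add]
          congr 1
          ring
        calc (1 + ‖y‖^2)^2 * (c * Real.exp (-‖y‖^2/4))
            ≤ (256 * Real.exp (‖y‖^2/8)) * (c * Real.exp (-‖y‖^2/4)) := by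
              apply mul_le_mul_of_nonneg_right _ (by positivity)
              rw [← e3]; exact e2
          _ = 256 * c * (Real.exp (‖y‖^2/8) * Real.exp (-‖y‖^2/4)) := by ring
          _ = 256 * c * Real.exp (-‖y‖^2/8) := by rw [e4]
      have h1 : (0:ℝ) ≤ (1 + ‖y‖^2)^2 * ρ y := mul_nonneg (by positivity) (hρ0 y)
      rw [Real.norm_eq_abs, Real.norm_eq_abs, abs_of_nonneg h1,
        abs_of_nonneg (by positivity : (0:ℝ) ≤ 256 * c * Real.exp (-‖y‖^2/8))]
      exact key
  obtain ⟨I, hIdef⟩ : ∃ I : ℝ, I = ∫ y, (1 + ‖y‖^2)^2 * ρ y := ⟨_, rfl⟩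
  -- squeeze
  have hlim : Filter.Tendsto (fun s : ℝ => C^2/s^2 * I) Filter.atTop (nhds 0) := by
    have h1 : Filter.Tendsto (fun s : ℝ => (s^2)⁻¹) Filter.atTop (nhds 0) :=
      (tendsto_pow_atTop two_ne_zero).inv_tendsto_atTop
    have h2 := h1.const_mul (C^2 * I)
    rw [mul_zero] at h2
    refine h2.congr fun s => by ring
  apply tendsto_of_tendsto_of_tendsto_of_le_of_le' tendsto_const_nhds hlim
  · filter_upwards with s
    exact integral_nonneg fun y => mul_nonneg (sq_nonneg _) (hρ0 y)
  · filter_upwards [eventually_ge_atTop (1:ℝ)] with s hs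
    have hs0 : (0:ℝ) < s := by linarith
    rw [hIdef, ← integral_const_mul]
    apply integral_mono_of_nonneg
    · filter_upwards with y
      exact mul_nonneg (sq_nonneg _) (hρ0 y)
    · exact hint.const_mul _
    · filter_upwards with y
      have hb := hbound s hs y
      have hsq : (V y s)^2 ≤ (C * (1 + ‖y‖^2) / s)^2 := by
        rw [← sq_abs (V y s)]
        exact pow_le_pow_left₀ (abs_nonneg _) hb 2
      calc (V y s)^2 * ρ y ≤ (C * (1 + ‖y‖^2) / s)^2 * ρ y :=
            mul_le_mul_of_nonneg_right hsq (hρ0 y)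
        _ = C^2/s^2 * ((1 + ‖y‖^2)^2 * ρ y) := by ring
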